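/- arXiv:1804.06489 — 5 statements merged into one kernel-verified Lean document; each statement's English description precedes it below -/
import Mathlib

section
/- Let t, j ∈ ℕ with j ≤ t and μ > 0. Then ∫_0^∞ 2s · e^{−μ(j+1)s} (2e^{−μs} − e^{−2μs})^{t−j} ds = ∑_{k=0}^{t−j} C(t−j, k) · 2^{k+1} · (−1)^{t−j−k} / (μ(2t+1−j−k))^2, where C(n,k) denotes the binomial coefficient. -/
open Real MeasureTheory Set

lemma my_integrableOn (a : ℝ) (ha : 0 < a) :
    IntegrableOn (fun s : ℝ => s * Real.exp (-(a * s))) (Set.Ioi 0) := by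
  apply integrable_of_isBigO_exp_neg (b := a / 2) (by positivity)
  · fun_prop
  · have h0 : Filter.Tendsto (fun x : ℝ => x ^ (1:ℝ) * Real.exp (-(a/2) * x))
        Filter.atTop (nhds 0) := tendsto_rpow_mul_exp_neg_mul_atTop_nhds_zero 1 (a/2) (by positivity)
    have h1 : (fun x : ℝ => x * Real.exp (-(a/2) * x)) =O[Filter.atTop] (fun _ : ℝ => (1:ℝ)) := by
      have := h0.isBigO_one ℝ
      simpa [Real.rpow_one] using this
    have h2 := h1.mul (Asymptotics.isBigO_refl (fun x : ℝ => Real.exp (-(a/2) * x)) Filter.atTop)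
    have heq : (fun x : ℝ => x * Real.exp (-(a/2) * x) * Real.exp (-(a/2) * x))
        = fun x : ℝ => x * Real.exp (-(a * x)) := by
      funext x
      rw [mul_assoc, ← Real.exp_add]
      ring_nf
    rw [heq] at h2
    simpa using h2

lemma my_integral (a : ℝ) (ha : 0 < a) :
    ∫ s in Set.Ioi (0:ℝ), s * Real.exp (-(a * s)) = 1 / a ^ 2 := by
  have h := Real.integral_rpow_mul_exp_neg_mul_Ioi (a := 2) (r := a) two_pos ha
  have h2 : Real.Gamma 2 = 1 := by
    rw [show (2:ℝ) = 1 + 1 by norm_num, Real.Gamma_add_one one_ne_zero, Real.Gamma_one, mul_one]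
  rw [h2, mul_one] at h
  rw [show ((2:ℝ) - 1) = 1 by norm_num] at h
  simp only [Real.rpow_one] at h
  rw [h, show ((2:ℝ)) = ((2:ℕ):ℝ) by norm_num, Real.rpow_natCast]
  rw [div_pow, one_pow]

/-- Second moment of the type-`j` request service time in the
replicate-to-all system with availability `t` and exponential rate-`μ` servers (Lemma 1):
`∫₀^∞ 2s e^{−μ(j+1)s} (2e^{−μs} − e^{−2μs})^{t−j} ds
  = ∑_{k=0}^{t−j} C(t−j,k) 2^{k+1} (−1)^{t−j−k} / (μ(2t+1−j−k))²`. -/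
theorem type_j_second_moment_formula (t j : ℕ) (hjt : j ≤ t) (μ : ℝ) (hμ : 0 < μ) :
    ∫ s in Set.Ioi (0 : ℝ),
        2 * s * (Real.exp (-(μ * (j + 1) * s)) *
          (2 * Real.exp (-(μ * s)) - Real.exp (-(2 * μ * s))) ^ (t - j))
      = ∑ k ∈ Finset.range (t - j + 1),
          (t - j).choose k * 2 ^ (k + 1) * (-1 : ℝ) ^ (t - j - k) /
            (μ * ((2 * t + 1 - j - k : ℕ) : ℝ)) ^ 2 := by
  set n := t - j with hn
  have key : ∀ s : ℝ,
      2 * s * (Real.exp (-(μ * (j + 1) * s)) *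
        (2 * Real.exp (-(μ * s)) - Real.exp (-(2 * μ * s))) ^ n)
      = ∑ k ∈ Finset.range (n + 1),
          ((n.choose k : ℝ) * 2 ^ (k + 1) * (-1 : ℝ) ^ (n - k)) *
            (s * Real.exp (-((μ * (2 * (t:ℝ) + 1 - (j:ℝ) - (k:ℝ))) * s))) := by
    intro s
    rw [sub_pow, Finset.mul_sum, Finset.mul_sum]
    apply Finset.sum_congr rfl
    intro k hk
    have hk' : k ≤ n := Nat.lt_succ_iff.mp (Finset.mem_range.mp hk)
    have hsign : ((-1 : ℝ)) ^ (k + n) = (-1 : ℝ) ^ (n - k) := by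
      rw [show k + n = (n - k) + 2 * k by omega, pow_add, pow_mul]
      norm_num
    rw [hsign, mul_pow, ← Real.exp_nat_mul, ← Real.exp_nat_mul]
    have hc1 : ((n - k : ℕ) : ℝ) = (t : ℝ) - j - k := by
      have : ((n : ℕ) : ℝ) = (t : ℝ) - j := by
        rw [hn]; push_cast [hjt]; ring
      push_cast [hk']
      rw [this]
    rw [hc1]
    rw [show -((μ * (2 * (t:ℝ) + 1 - ↑j - ↑k)) * s)
        = -(μ * (↑j + 1) * s) + (↑k * -(μ * s) + (((t:ℝ) - ↑j - ↑k) * -(2 * μ * s))) by ring,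
      Real.exp_add, Real.exp_add]
    ring
  simp only [key]
  have hpos : ∀ k ∈ Finset.range (n + 1), 0 < μ * (2 * (t:ℝ) + 1 - j - k) := by
    intro k hk
    have hk' : k ≤ n := Nat.lt_succ_iff.mp (Finset.mem_range.mp hk)
    have : (j : ℝ) + k ≤ 2 * t := by
      have : j + k ≤ 2 * t := by omega
      exact_mod_cast this
    have : 0 < 2 * (t:ℝ) + 1 - j - k := by linarith
    positivity
  rw [MeasureTheory.integral_finset_sum]
  · refine Finset.sum_congr rfl fun k hk => ?_
    have hk' : k ≤ n := Nat.lt_succ_iff.mp (Finset.mem_range.mp hk)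
    rw [MeasureTheory.integral_const_mul, my_integral _ (hpos k hk)]
    have hcast : ((2 * t + 1 - j - k : ℕ) : ℝ) = 2 * (t:ℝ) + 1 - j - k := by
      have h1 : j + k ≤ 2 * t + 1 := by omega
      push_cast [Nat.cast_sub (by omega : j ≤ 2 * t + 1), Nat.cast_sub (by omega : k ≤ 2 * t + 1 - j)]
      ring
    rw [hcast]
    ring
  · intro k hk
    exact ((my_integrableOn _ (hpos k hk)).const_mul _)
end

section
/- Let t, j ∈ ℕ with j < t, let μ > 0 and let m ≥ 1 be an integer. Then ∫_0^∞ s^{m−1} e^{−μ(j+2)s} (2e^{−μs} − e^{−2μs})^{t−j−1} ds < ∫_0^∞ s^{m−1} e^{−μ(j+1)s} (2e^{−μs} − e^{−2μs})^{t−j} ds. Consequently all moments E[S_j^m] = ∫_0^∞ m s^{m−1} P(S_j > s) ds of the type-j request service time decrease strictly monotonically in j. -/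
open Real MeasureTheory

/-- All moments of the type-`j` request service time in the replicate-to-all
system with availability `t` strictly decrease in `j` (Lemma 1): for every integer `m ≥ 1`,
`∫₀^∞ s^{m−1} e^{−μ(j+2)s} (2e^{−μs} − e^{−2μs})^{t−j−1} ds
  < ∫₀^∞ s^{m−1} e^{−μ(j+1)s} (2e^{−μs} − e^{−2μs})^{t−j} ds`. -/
theorem type_j_moments_strict_anti (t j : ℕ) (hjt : j < t) (μ : ℝ) (hμ : 0 < μ)
    (m : ℕ) (hm : 1 ≤ m) :
    ∫ s in Set.Ioi (0 : ℝ),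
        s ^ (m - 1) * (Real.exp (-(μ * (j + 2) * s)) *
          (2 * Real.exp (-(μ * s)) - Real.exp (-(2 * μ * s))) ^ (t - j - 1))
      < ∫ s in Set.Ioi (0 : ℝ),
        s ^ (m - 1) * (Real.exp (-(μ * (j + 1) * s)) *
          (2 * Real.exp (-(μ * s)) - Real.exp (-(2 * μ * s))) ^ (t - j)) := by
  set f : ℝ → ℝ := fun s => s ^ (m - 1) * (Real.exp (-(μ * (j + 2) * s)) *
      (2 * Real.exp (-(μ * s)) - Real.exp (-(2 * μ * s))) ^ (t - j - 1)) with hf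
  set g : ℝ → ℝ := fun s => s ^ (m - 1) * (Real.exp (-(μ * (j + 1) * s)) *
      (2 * Real.exp (-(μ * s)) - Real.exp (-(2 * μ * s))) ^ (t - j)) with hg
  -- basic facts for s > 0
  have hE : ∀ s : ℝ, 0 < s → 0 < Real.exp (-(μ * s)) ∧ Real.exp (-(μ * s)) < 1 := by
    intro s hs
    exact ⟨Real.exp_pos _, Real.exp_lt_one_iff.2 (by nlinarith)⟩
  have hbase : ∀ s : ℝ, 0 < s →
      0 < 2 * Real.exp (-(μ * s)) - Real.exp (-(2 * μ * s)) ∧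
      2 * Real.exp (-(μ * s)) - Real.exp (-(2 * μ * s)) ≤ 1 := by
    intro s hs
    obtain ⟨h0, h1⟩ := hE s hs
    have h2 : Real.exp (-(2 * μ * s)) = Real.exp (-(μ * s)) ^ 2 := by
      rw [← Real.exp_nat_mul]; ring_nf
    constructor
    · rw [h2]; nlinarith
    · rw [h2]; nlinarith
  -- bound for integrability
  have hbound : ∀ b : ℝ, 0 < b → IntegrableOn (fun s : ℝ => s ^ (m-1) * Real.exp (-(b * s))) (Set.Ioi 0) := by
    intro b hb
    have := integrableOn_rpow_mul_exp_neg_mul_rpow (p := 1) (s := (m - 1 : ℕ)) (b := b)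
      (neg_one_lt_zero.trans_le (Nat.cast_nonneg _)) one_pos hb
    simp only [Real.rpow_one] at this
    refine this.congr_fun (fun s hs => ?_) measurableSet_Ioi
    beta_reduce
    rw [Real.rpow_natCast, neg_mul]
  have hfi : IntegrableOn f (Set.Ioi 0) := by
    refine Integrable.mono' (hbound (μ * (j + 2)) (by positivity)) ?_ ?_
    · apply Measurable.aestronglyMeasurable; fun_prop
    · filter_upwards [ae_restrict_mem measurableSet_Ioi] with s hs
      obtain ⟨hb0, hb1⟩ := hbase s hs
      have hs0 : (0:ℝ) < s := hs
      rw [Real.norm_eq_abs, abs_of_nonneg (by positivity)]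
      have : (2 * Real.exp (-(μ * s)) - Real.exp (-(2 * μ * s))) ^ (t - j - 1) ≤ 1 :=
        pow_le_one₀ hb0.le hb1
      calc f s ≤ s ^ (m-1) * (Real.exp (-(μ * (j + 2) * s)) * 1) := by
            apply mul_le_mul_of_nonneg_left _ (by positivity)
            exact mul_le_mul_of_nonneg_left this (Real.exp_pos _).le
        _ = s ^ (m-1) * Real.exp (-(μ * (j + 2) * s)) := by ring
  have hgi : IntegrableOn g (Set.Ioi 0) := by
    refine Integrable.mono' (hbound (μ * (j + 1)) (by positivity)) ?_ ?_
    · apply Measurable.aestronglyMeasurable; fun_prop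
    · filter_upwards [ae_restrict_mem measurableSet_Ioi] with s hs
      obtain ⟨hb0, hb1⟩ := hbase s hs
      have hs0 : (0:ℝ) < s := hs
      rw [Real.norm_eq_abs, abs_of_nonneg (by positivity)]
      have : (2 * Real.exp (-(μ * s)) - Real.exp (-(2 * μ * s))) ^ (t - j) ≤ 1 :=
        pow_le_one₀ hb0.le hb1
      calc g s ≤ s ^ (m-1) * (Real.exp (-(μ * (j + 1) * s)) * 1) := by
            apply mul_le_mul_of_nonneg_left _ (by positivity)
            exact mul_le_mul_of_nonneg_left this (Real.exp_pos _).le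
        _ = s ^ (m-1) * Real.exp (-(μ * (j + 1) * s)) := by ring
  -- pointwise strict inequality
  have hlt : ∀ s : ℝ, 0 < s → f s < g s := by
    intro s hs
    obtain ⟨hE0, hE1⟩ := hE s hs
    obtain ⟨hb0, hb1⟩ := hbase s hs
    have htj : t - j = (t - j - 1) + 1 := by omega
    have hexp : Real.exp (-(μ * (j + 2) * s)) =
        Real.exp (-(μ * (j + 1) * s)) * Real.exp (-(μ * s)) := by
      rw [← Real.exp_add]; ring_nf
    have h2 : Real.exp (-(2 * μ * s)) = Real.exp (-(μ * s)) ^ 2 := by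
      rw [← Real.exp_nat_mul]; ring_nf
    have hsm : 0 < s ^ (m - 1) := by positivity
    have hpowpos : 0 < (2 * Real.exp (-(μ * s)) - Real.exp (-(2 * μ * s))) ^ (t - j - 1) :=
      pow_pos hb0 _
    have hps : (2 * Real.exp (-(μ * s)) - Real.exp (-(2 * μ * s))) ^ (t - j)
        = (2 * Real.exp (-(μ * s)) - Real.exp (-(2 * μ * s))) ^ (t - j - 1) *
          (2 * Real.exp (-(μ * s)) - Real.exp (-(2 * μ * s))) := by
      conv_lhs => rw [htj, pow_succ]
    rw [hf, hg]
    simp only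
    rw [hps, hexp]
    have key : Real.exp (-(μ * s)) < 2 * Real.exp (-(μ * s)) - Real.exp (-(2 * μ * s)) := by
      rw [h2]; nlinarith
    nlinarith [mul_pos (Real.exp_pos (-(μ * (↑j + 1) * s))) hpowpos,
      mul_pos hsm (mul_pos (Real.exp_pos (-(μ * (↑j + 1) * s))) hpowpos)]
  -- conclude
  rw [← sub_pos, ← integral_sub hgi hfi]
  have hpos := (setIntegral_pos_iff_support_of_nonneg_ae
    (f := fun s => g s - f s) (μ := volume) (s := Set.Ioi 0) ?_ (hgi.sub hfi)).2 ?_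
  · exact hpos
  · filter_upwards [ae_restrict_mem measurableSet_Ioi] with s hs
    exact sub_nonneg.2 (hlt s hs).le
  · have hsub : Set.Ioi (0:ℝ) ⊆ Function.support (fun s => g s - f s) ∩ Set.Ioi 0 := by
      intro s hs
      exact ⟨sub_ne_zero.2 (hlt s hs).ne', hs⟩
    calc (0:ENNReal) < volume (Set.Ioi (0:ℝ)) := by simp
      _ ≤ _ := measure_mono hsub
end

section
/- Let α, β, γ > 0 with α < β + γ and β < α + γ. Define p₀ = (γ² − (α−β)²)/(γ(α+β+γ)), and for i ≥ 0 set a_i = (α/(β+γ))^i · p₀ and b_i = (β/(α+γ))^i · p₀. Then: (i) α a_i = (β+γ) a_{i+1} and β b_i = (α+γ) b_{i+1} for all i ≥ 0 (the high-traffic balance equations hold); and (ii) p₀ + ∑_{i=1}^∞ a_i + ∑_{i=1}^∞ b_i = 1, where both series converge. -/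
lemma geom_aux (r c : ℝ) (hr0 : 0 ≤ r) (hr1 : r < 1) :
    Summable (fun i : ℕ => r ^ (i + 1) * c) ∧
      (∑' i : ℕ, r ^ (i + 1) * c) = r / (1 - r) * c := by
  have hs : Summable (fun i : ℕ => r ^ i) := summable_geometric_of_lt_one hr0 hr1
  have hs2 : Summable (fun i : ℕ => r ^ (i + 1) * c) := by
    simpa [pow_succ, mul_comm, mul_assoc, mul_left_comm] using (hs.mul_right (r * c))
  refine ⟨hs2, ?_⟩
  have h0 : (∑' i : ℕ, r ^ i) = (1 - r)⁻¹ := tsum_geometric_of_lt_one hr0 hr1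
  have : (∑' i : ℕ, r ^ (i + 1) * c) = (∑' i : ℕ, r ^ i) * (r * c) := by
    rw [← tsum_mul_right]
    congr 1; ext i; ring
  rw [this, h0]
  field_simp

/-- High-traffic steady-state probabilities of the replicate-to-all system
with availability one (Section III-B): with `p₀ = (γ²−(α−β)²)/(γ(α+β+γ))`,
`a_i = (α/(β+γ))^i p₀` and `b_i = (β/(α+γ))^i p₀`, the balance equations
`α a_i = (β+γ) a_{i+1}`, `β b_i = (α+γ) b_{i+1}` hold, the series `∑_{i≥1} a_i` and
`∑_{i≥1} b_i` converge, and `p₀ + ∑_{i=1}^∞ a_i + ∑_{i=1}^∞ b_i = 1`. -/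
theorem high_traffic_steady_state
    (α β γ : ℝ) (hα : 0 < α) (hβ : 0 < β) (hγ : 0 < γ)
    (h1 : α < β + γ) (h2 : β < α + γ)
    (p₀ : ℝ) (hp₀ : p₀ = (γ ^ 2 - (α - β) ^ 2) / (γ * (α + β + γ)))
    (a b : ℕ → ℝ)
    (ha : ∀ i, a i = (α / (β + γ)) ^ i * p₀)
    (hb : ∀ i, b i = (β / (α + γ)) ^ i * p₀) :
    (∀ i, α * a i = (β + γ) * a (i + 1) ∧ β * b i = (α + γ) * b (i + 1)) ∧
      Summable (fun i : ℕ => a (i + 1)) ∧ Summable (fun i : ℕ => b (i + 1)) ∧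
      p₀ + (∑' i : ℕ, a (i + 1)) + (∑' i : ℕ, b (i + 1)) = 1 := by
  have hβγ : (0:ℝ) < β + γ := by linarith
  have hαγ : (0:ℝ) < α + γ := by linarith
  have hr1 : α / (β + γ) < 1 := (div_lt_one hβγ).mpr h1
  have hr1' : β / (α + γ) < 1 := (div_lt_one hαγ).mpr h2
  have hr0 : 0 ≤ α / (β + γ) := le_of_lt (div_pos hα hβγ)
  have hr0' : 0 ≤ β / (α + γ) := le_of_lt (div_pos hβ hαγ)
  obtain ⟨hsa, hta⟩ := geom_aux (α / (β + γ)) p₀ hr0 hr1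
  obtain ⟨hsb, htb⟩ := geom_aux (β / (α + γ)) p₀ hr0' hr1'
  refine ⟨fun i => ⟨?_, ?_⟩, ?_, ?_, ?_⟩
  · rw [ha, ha]
    rw [pow_succ]
    field_simp
  · rw [hb, hb]
    rw [pow_succ]
    field_simp
  · simpa [ha] using hsa
  · simpa [hb] using hsb
  · have e1 : (∑' i : ℕ, a (i + 1)) = α / (β + γ) / (1 - α / (β + γ)) * p₀ := by
      simpa [ha] using hta
    have e2 : (∑' i : ℕ, b (i + 1)) = β / (α + γ) / (1 - β / (α + γ)) * p₀ := by
      simpa [hb] using htb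
    rw [e1, e2, hp₀]
    have h1' : β + γ - α ≠ 0 := by linarith
    have h2' : α + γ - β ≠ 0 := by linarith
    have h3 : γ * (α + β + γ) ≠ 0 := by positivity
    field_simp
    ring
end

section
/- Let t, j ∈ ℕ with j ≤ t, let σ > 0 and let α > 0 satisfy α(t+1) > 1. Then σ + ∫_σ^∞ (σ/x)^{α(j+1)} · (2(σ/x)^α − (σ/x)^{2α})^{t−j} dx = ∑_{k=0}^{t−j} C(t−j, k) · 2^k · (−1)^{t−j−k} · σ · α(2t+1−j−k)/(α(2t+1−j−k) − 1), where C(n,k) denotes the binomial coefficient. -/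
open Real MeasureTheory

lemma pareto_aux_integrable {σ β : ℝ} (hσ : 0 < σ) (hβ : 1 < β) :
    IntegrableOn (fun x : ℝ => (σ / x) ^ β) (Set.Ioi σ) := by
  have : IntegrableOn (fun x : ℝ => σ ^ β * x ^ (-β)) (Set.Ioi σ) :=
    (integrableOn_Ioi_rpow_of_lt (by linarith) hσ).const_mul _
  refine this.congr_fun (fun x hx => ?_) measurableSet_Ioi
  have hx0 : 0 < x := hσ.trans hx
  dsimp only
  rw [div_rpow hσ.le hx0.le, rpow_neg hx0.le, div_eq_mul_inv]

lemma pareto_aux_integral {σ β : ℝ} (hσ : 0 < σ) (hβ : 1 < β) :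
    ∫ x in Set.Ioi σ, (σ / x) ^ β = σ / (β - 1) := by
  have hcong : ∀ x ∈ Set.Ioi σ, (σ / x) ^ β = σ ^ β * x ^ (-β) := by
    intro x hx
    have hx0 : 0 < x := hσ.trans hx
    rw [div_rpow hσ.le hx0.le, rpow_neg hx0.le, div_eq_mul_inv]
  rw [setIntegral_congr_fun measurableSet_Ioi hcong, integral_const_mul,
    integral_Ioi_rpow_of_lt (by linarith) hσ]
  have h1 : σ ^ β * σ ^ (-β + 1) = σ := by
    rw [← rpow_add hσ]; simp
  have hβ1 : β - 1 ≠ 0 := by linarith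
  have hβ2 : -β + 1 ≠ 0 := by linarith
  rw [eq_div_iff hβ1]
  have h2 : σ ^ β * (-σ ^ (-β + 1) / (-β + 1)) * (β - 1)
      = σ ^ β * σ ^ (-β + 1) * ((-(β - 1)) / (-β + 1) * (β - 1) / (β - 1)) := by
    field_simp
  rw [h2, h1]
  have h3 : (-(β - 1)) / (-β + 1) = 1 := by
    rw [show -(β - 1) = -β + 1 by ring, div_self hβ2]
  rw [h3]
  field_simp

/-- First-moment formula (equation (20)) for the type-`j` request service
time with `Pareto(σ, α)` servers:
`σ + ∫_σ^∞ (σ/x)^{α(j+1)} (2(σ/x)^α − (σ/x)^{2α})^{t−j} dx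
  = ∑_{k=0}^{t−j} C(t−j,k) 2^k (−1)^{t−j−k} σ α(2t+1−j−k)/(α(2t+1−j−k) − 1)`. -/
theorem pareto_type_j_mean_formula (t j : ℕ) (hjt : j ≤ t)
    (σ α : ℝ) (hσ : 0 < σ) (hα : 0 < α) (hα1 : α * (t + 1) > 1) :
    σ + ∫ x in Set.Ioi σ,
        (σ / x) ^ (α * (j + 1)) *
          (2 * (σ / x) ^ α - (σ / x) ^ (2 * α)) ^ (t - j)
      = ∑ k ∈ Finset.range (t - j + 1),
          (t - j).choose k * 2 ^ k * (-1 : ℝ) ^ (t - j - k) * σ *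
            (α * ((2 * t + 1 - j - k : ℕ) : ℝ)) /
              (α * ((2 * t + 1 - j - k : ℕ) : ℝ) - 1) := by
  obtain ⟨m, hm⟩ : ∃ m, t - j = m := ⟨t - j, rfl⟩
  rw [hm]
  have hnk : ∀ k ∈ Finset.range (m + 1), (2 * t + 1 - j - k : ℕ) = (m - k) + t + 1 := by
    intro k hk
    rw [Finset.mem_range] at hk
    omega
  have hgt : ∀ k ∈ Finset.range (m + 1), 1 < α * ((2 * t + 1 - j - k : ℕ) : ℝ) := by
    intro k hk
    rw [Finset.mem_range] at hk
    have h : (t + 1 : ℕ) ≤ (2 * t + 1 - j - k : ℕ) := by omega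
    have hle : ((t + 1 : ℕ) : ℝ) ≤ ((2 * t + 1 - j - k : ℕ) : ℝ) := Nat.cast_le.mpr h
    push_cast at hle
    nlinarith
  -- pointwise expansion of the integrand
  have hpt : ∀ x ∈ Set.Ioi σ,
      (σ / x) ^ (α * (j + 1)) * (2 * (σ / x) ^ α - (σ / x) ^ (2 * α)) ^ m
      = ∑ k ∈ Finset.range (m + 1),
          ((m.choose k : ℝ) * 2 ^ k * (-1 : ℝ) ^ (m - k)) *
            (σ / x) ^ (α * ((2 * t + 1 - j - k : ℕ) : ℝ)) := by
    intro x hx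
    have hx0 : 0 < x := hσ.trans hx
    have ha0 : (0:ℝ) ≤ σ / x := by positivity
    set a : ℝ := (σ / x) ^ α with hadef
    have h2a : (σ / x) ^ (2 * α) = a ^ 2 := by
      rw [mul_comm, rpow_mul ha0, hadef]
      norm_num
    have hj1 : (σ / x) ^ (α * (j + 1)) = a ^ (j + 1) := by
      rw [rpow_mul ha0, ← hadef]
      rw [show ((j:ℝ) + 1) = ((j + 1 : ℕ) : ℝ) by push_cast; ring, rpow_natCast]
    rw [h2a, hj1, sub_pow, Finset.mul_sum]
    refine Finset.sum_congr rfl (fun k hk => ?_)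
    have hkm : k ≤ m := by
      rw [Finset.mem_range] at hk; omega
    have hN : (σ / x) ^ (α * ((2 * t + 1 - j - k : ℕ) : ℝ)) = a ^ (2 * t + 1 - j - k : ℕ) := by
      rw [rpow_mul ha0, ← hadef, rpow_natCast]
    rw [hN, hnk k hk]
    have hcomb : a ^ (j + 1) * (2 * a) ^ k * (a ^ 2) ^ (m - k)
        = 2 ^ k * a ^ ((j + 1) + k + 2 * (m - k)) := by
      rw [mul_pow, ← pow_mul, pow_add, pow_add]; ring
    have hexp : (j + 1) + k + 2 * (m - k) = (m - k) + t + 1 := by omega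
    have hsign : (-1 : ℝ) ^ (k + m) = (-1 : ℝ) ^ (m - k) := by
      rw [show k + m = (m - k) + 2 * k by omega, pow_add]
      simp [pow_mul]
    calc a ^ (j + 1) * ((-1 : ℝ) ^ (k + m) * (2 * a) ^ k * (a ^ 2) ^ (m - k) * (m.choose k))
        = (-1 : ℝ) ^ (k + m) * (m.choose k) * (a ^ (j + 1) * (2 * a) ^ k * (a ^ 2) ^ (m - k)) := by
          ring
      _ = (-1 : ℝ) ^ (m - k) * (m.choose k) * (2 ^ k * a ^ ((m - k) + t + 1)) := by
          rw [hcomb, hexp, hsign]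
      _ = (m.choose k : ℝ) * 2 ^ k * (-1 : ℝ) ^ (m - k) * a ^ ((m - k) + t + 1) := by
          ring
  rw [setIntegral_congr_fun measurableSet_Ioi hpt]
  rw [integral_finset_sum _ (fun k hk => ((pareto_aux_integrable hσ (hgt k hk)).const_mul _))]
  have hint : ∀ k ∈ Finset.range (m + 1),
      ∫ x in Set.Ioi σ, ((m.choose k : ℝ) * 2 ^ k * (-1 : ℝ) ^ (m - k)) *
          (σ / x) ^ (α * ((2 * t + 1 - j - k : ℕ) : ℝ))
        = ((m.choose k : ℝ) * 2 ^ k * (-1 : ℝ) ^ (m - k)) *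
            (σ / (α * ((2 * t + 1 - j - k : ℕ) : ℝ) - 1)) := by
    intro k hk
    rw [integral_const_mul, pareto_aux_integral hσ (hgt k hk)]
  rw [Finset.sum_congr rfl hint]
  have hone : σ = ∑ k ∈ Finset.range (m + 1),
      (m.choose k : ℝ) * 2 ^ k * (-1 : ℝ) ^ (m - k) * σ := by
    have hb : ((2:ℝ) + (-1)) ^ m = ∑ k ∈ Finset.range (m + 1),
        (2:ℝ) ^ k * (-1:ℝ) ^ (m - k) * m.choose k := add_pow 2 (-1) m
    have h1 : (1:ℝ) = ∑ k ∈ Finset.range (m + 1),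
        (2:ℝ) ^ k * (-1:ℝ) ^ (m - k) * m.choose k := by
      rw [← hb]; norm_num
    calc σ = (∑ k ∈ Finset.range (m + 1), (2:ℝ) ^ k * (-1:ℝ) ^ (m - k) * m.choose k) * σ := by
          rw [← h1]; ring
      _ = _ := by rw [Finset.sum_mul]; exact Finset.sum_congr rfl (fun k _ => by ring)
  have key : ∀ k ∈ Finset.range (m + 1),
      (m.choose k : ℝ) * 2 ^ k * (-1 : ℝ) ^ (m - k) * σ *
          (α * ((2 * t + 1 - j - k : ℕ) : ℝ)) / (α * ((2 * t + 1 - j - k : ℕ) : ℝ) - 1)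
      = (m.choose k : ℝ) * 2 ^ k * (-1 : ℝ) ^ (m - k) * σ +
        ((m.choose k : ℝ) * 2 ^ k * (-1 : ℝ) ^ (m - k)) *
          (σ / (α * ((2 * t + 1 - j - k : ℕ) : ℝ) - 1)) := by
    intro k hk
    have h1 := hgt k hk
    have hne : α * ((2 * t + 1 - j - k : ℕ) : ℝ) - 1 ≠ 0 := by linarith
    field_simp
    ring
  rw [Finset.sum_congr rfl key, Finset.sum_add_distrib, ← hone]
end

section
/- Let t ≥ 1 be an integer. Define reals B_t, B_{t−1}, …, B_0 by B_t = (1+t)/(1+2t) and, for 0 ≤ j < t, B_j = (1+j)/(1+2t) + (2(t−j)/(1+2t)) · B_{j+1}. Then B_j > 1/2 for every j with 0 ≤ j ≤ t. -/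
/-- Key estimate in the proof of Theorem 7: with
`B_t = (1+t)/(1+2t)` and `B_j = (1+j)/(1+2t) + (2(t−j)/(1+2t)) B_{j+1}` for `0 ≤ j < t`,
one has `B_j > 1/2` for all `0 ≤ j ≤ t`. -/
theorem theorem7_Bj_gt_half (t : ℕ) (ht : 1 ≤ t) (B : ℕ → ℝ)
    (hBt : B t = (1 + (t : ℝ)) / (1 + 2 * t))
    (hBj : ∀ j : ℕ, j < t →
      B j = (1 + (j : ℝ)) / (1 + 2 * t) + (2 * ((t : ℝ) - j) / (1 + 2 * t)) * B (j + 1)) :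
    ∀ j : ℕ, j ≤ t → B j > 1 / 2 := by
  have ht' : (1:ℝ) ≤ t := by exact_mod_cast ht
  have hpos : (0:ℝ) < 1 + 2 * t := by linarith
  have key : ∀ d : ℕ, d ≤ t → B (t - d) > 1 / 2 := by
    intro d
    induction d with
    | zero =>
      intro _
      simp only [Nat.sub_zero, hBt]
      rw [gt_iff_lt, div_lt_div_iff₀ (by norm_num) hpos]
      linarith
    | succ n ih =>
      intro hd
      have hj : t - (n + 1) < t := by omega
      have h1 : t - (n + 1) + 1 = t - n := by omega
      have hB := hBj (t - (n + 1)) hj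
      rw [h1] at hB
      have ihn := ih (by omega)
      have hjlt : ((t - (n + 1) : ℕ) : ℝ) < t := by exact_mod_cast hj
      have hjd : ((t - (n + 1) : ℕ) : ℝ) ≤ (t : ℝ) - 1 := by
        have : (t - (n + 1)) + 1 ≤ t := by omega
        have := (Nat.cast_le (α := ℝ)).2 this
        push_cast at this
        linarith
      have hcomb : B (t - (n + 1)) =
          ((1 + ((t - (n + 1) : ℕ) : ℝ)) + 2 * ((t : ℝ) - ((t - (n + 1) : ℕ) : ℝ)) * B (t - n))
            / (1 + 2 * t) := by
        rw [hB]; ring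
      rw [hcomb, gt_iff_lt, lt_div_iff₀ hpos]
      nlinarith [mul_pos (sub_pos.2 hjlt) (sub_pos.2 ihn)]
  intro j hj
  simpa [Nat.sub_sub_self hj] using key (t - j) (Nat.sub_le t j)
end
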